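/- Let ν be a probability measure on [0,∞) with cumulative distribution function F such that F̄ = 1 − F is everywhere positive and regularly varying at infinity with index θ − α for some 0 < θ < α, and let (a_n) be any sequence with a_n → ∞ and lim_{n→∞} n a_n^{−α} H(a_n) = 1 (such a sequence exists). Then for every x > 0, lim_{n→∞} F_n( a_n x ) = ( 1 + x^{θ−α} ) exp( −(α/(α−θ)) x^{θ−α} ). In particular the Kendall random walk normalized by a_n converges in distribution. -/

import Mathlib

open MeasureTheory Filter Real Topology Set

section meas
variable {α : ℝ} (ν : Measure ℝ) [IsProbabilityMeasure ν]

lemma aux_ae_nonneg (hν : ν (Set.Iio 0) = 0) : ∀ᵐ x ∂ν, 0 ≤ x := by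
  rw [ae_iff]
  convert hν using 2
  ext x; simp [Set.mem_Iio, not_le]

lemma aux_integrableOn_rpow (hα : 0 < α) {s : Set ℝ} (hs : MeasurableSet s) (v : ℝ)
    (hsv : s ⊆ Set.Iic v) (hsv0 : s ⊆ Set.Ici 0) :
    IntegrableOn (fun x => x ^ α) s ν := by
  apply Measure.integrableOn_of_bounded (M := (max v 1) ^ α) (measure_ne_top _ _)
    ((Real.continuous_rpow_const hα.le).measurable.aestronglyMeasurable)
  filter_upwards [ae_restrict_mem hs] with x hxs
  rw [Real.norm_of_nonneg (Real.rpow_nonneg (hsv0 hxs) _)]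
  exact Real.rpow_le_rpow (hsv0 hxs) (le_trans (hsv hxs) (le_max_left _ _)) hα.le

lemma aux_meas_Ioc (u s : ℝ) (h : u ≤ s) :
    (ν (Set.Ioc u s)).toReal = (ν (Set.Iic s)).toReal - (ν (Set.Iic u)).toReal := by
  rw [← Iic_sdiff_Iic, measure_diff (Set.Iic_subset_Iic.2 h) measurableSet_Iic.nullMeasurableSet
    (measure_ne_top _ _), ENNReal.toReal_sub_of_le (measure_mono (Set.Iic_subset_Iic.2 h))
    (measure_ne_top _ _)]

lemma aux_int_split (hα : 0 < α) (u s : ℝ) (hu : 0 ≤ u) (hus : u ≤ s) :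
    ∫ x in Set.Icc 0 s, x ^ α ∂ν
      = (∫ x in Set.Icc 0 u, x ^ α ∂ν) + ∫ x in Set.Ioc u s, x ^ α ∂ν := by
  rw [← Set.Icc_union_Ioc_eq_Icc hu hus]
  exact setIntegral_union (Set.disjoint_left.2 (fun x hx hx' => absurd hx'.1 (not_lt.2 hx.2)))
    measurableSet_Ioc
    (aux_integrableOn_rpow ν hα measurableSet_Icc u (fun x hx => hx.2) (fun x hx => hx.1))
    (aux_integrableOn_rpow ν hα measurableSet_Ioc s (fun x hx => hx.2)
      (fun x hx => le_trans hu hx.1.le))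

lemma aux_int_Ioc_le (hα : 0 < α) (u s : ℝ) (hu : 0 ≤ u) (hus : u ≤ s) :
    ∫ x in Set.Ioc u s, x ^ α ∂ν ≤ s ^ α * (ν (Set.Ioc u s)).toReal := by
  have := setIntegral_mono_on (μ := ν) (f := fun x => x ^ α) (g := fun _ => s ^ α)
    (aux_integrableOn_rpow ν hα measurableSet_Ioc s (fun x hx => hx.2)
      (fun x hx => le_trans hu hx.1.le))
    (integrableOn_const) measurableSet_Ioc
    (fun x hx => Real.rpow_le_rpow (le_trans hu hx.1.le) hx.2 hα.le)
  simpa [mul_comm, measureReal_def] using this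

lemma aux_int_Ioc_ge (hα : 0 < α) (u s : ℝ) (hu : 0 ≤ u) (hus : u ≤ s) :
    u ^ α * (ν (Set.Ioc u s)).toReal ≤ ∫ x in Set.Ioc u s, x ^ α ∂ν := by
  have := setIntegral_mono_on (μ := ν) (f := fun _ => u ^ α) (g := fun x => x ^ α)
    (integrableOn_const)
    (aux_integrableOn_rpow ν hα measurableSet_Ioc s (fun x hx => hx.2)
      (fun x hx => le_trans hu hx.1.le)) measurableSet_Ioc
    (fun x hx => Real.rpow_le_rpow hu hx.1.le hα.le)
  simpa [mul_comm, measureReal_def] using this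

lemma aux_H_nonneg (t : ℝ) : 0 ≤ ∫ x in Set.Icc 0 t, x ^ α ∂ν :=
  setIntegral_nonneg measurableSet_Icc (fun x hx => Real.rpow_nonneg hx.1 _)

lemma aux_H_le (hα : 0 < α) (t : ℝ) (ht : 0 ≤ t) : ∫ x in Set.Icc 0 t, x ^ α ∂ν ≤ t ^ α := by
  have := setIntegral_mono_on (μ := ν) (f := fun x => x ^ α) (g := fun _ => t ^ α)
    (aux_integrableOn_rpow ν hα measurableSet_Icc t (fun x hx => hx.2) (fun x hx => hx.1))
    (integrableOn_const) measurableSet_Icc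
    (fun x hx => Real.rpow_le_rpow hx.1 hx.2 hα.le)
  refine le_trans this ?_
  simp only [setIntegral_const, smul_eq_mul, measureReal_def]
  calc (ν (Set.Icc 0 t)).toReal * t ^ α ≤ 1 * t ^ α := by
        apply mul_le_mul_of_nonneg_right _ (Real.rpow_nonneg ht _)
        exact ENNReal.toReal_le_of_le_ofReal one_pos.le (by simpa using prob_le_one)
    _ = t ^ α := one_mul _

lemma aux_G_eq (hα : 0 < α) (hν : ν (Set.Iio 0) = 0) (t : ℝ) (ht : 0 < t) :
    ∫ x, max (1 - (x / t) ^ α) 0 ∂ν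
      = (ν (Set.Iic t)).toReal - t ^ (-α) * ∫ x in Set.Icc 0 t, x ^ α ∂ν := by
  have hIcc : ν (Set.Icc 0 t) = ν (Set.Iic t) := by
    apply measure_congr
    rw [Filter.eventuallyEq_set]
    filter_upwards [aux_ae_nonneg ν hν] with x hx
    simp [Set.mem_Icc, Set.mem_Iic, hx]
  have h1 : ∫ x, max (1 - (x / t) ^ α) 0 ∂ν
      = ∫ x, (Set.Icc 0 t).indicator (fun x => 1 - x ^ α * t ^ (-α)) x ∂ν := by
    apply integral_congr_ae
    filter_upwards [aux_ae_nonneg ν hν] with x hx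
    rcases le_or_gt x t with h | h
    · rw [Set.indicator_of_mem (Set.mem_Icc.2 ⟨hx, h⟩)]
      rw [max_eq_left]
      · rw [Real.div_rpow hx ht.le, Real.rpow_neg ht.le, div_eq_mul_inv]
      · have : (x / t) ^ α ≤ 1 :=
          Real.rpow_le_one (div_nonneg hx ht.le) ((div_le_one ht).2 h) hα.le
        linarith
    · rw [Set.indicator_of_notMem (fun hc => absurd (Set.mem_Icc.1 hc).2 (not_le.2 h))]
      rw [max_eq_right]
      have : 1 < (x / t) ^ α :=
        (Real.one_lt_rpow_iff_of_pos (div_pos (ht.trans h) ht)).2 (Or.inl ⟨(one_lt_div ht).2 h, hα⟩)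
      linarith
  rw [h1, integral_indicator measurableSet_Icc]
  have hint : IntegrableOn (fun x => x ^ α * t ^ (-α)) (Set.Icc 0 t) ν :=
    (aux_integrableOn_rpow ν hα measurableSet_Icc t (fun x hx => hx.2)
      (fun x hx => hx.1)).mul_const _
  rw [integral_sub (show IntegrableOn (fun _ => (1:ℝ)) (Set.Icc 0 t) ν from integrableOn_const) hint,
    integral_mul_const, setIntegral_const, measureReal_def, hIcc]
  simp [mul_comm]

end meas

lemma aux_slope_rpow (p : ℝ) :
    Tendsto (fun l : ℝ => (l ^ p - 1) / (l - 1)) (𝓝[>] (1:ℝ)) (𝓝 p) := by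
  have h := (hasDerivAt_rpow_const (x := (1:ℝ)) (p := p) (Or.inl one_ne_zero))
  rw [hasDerivAt_iff_tendsto_slope] at h
  have h2 := h.mono_left (nhdsWithin_mono 1 (fun x hx => ne_of_gt hx))
  have h3 : p * (1:ℝ) ^ (p - 1) = p := by simp
  rw [h3] at h2
  refine h2.congr (fun l => ?_)
  rw [slope_def_field, Real.one_rpow]

lemma aux_tendsto_ratio (pa pb : ℝ) (hpb : pb ≠ 0) :
    Tendsto (fun l : ℝ => (l ^ pa - 1) / (1 - l ^ (-pb))) (𝓝[>] (1:ℝ)) (𝓝 (pa / pb)) := by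
  have h1 := aux_slope_rpow pa
  have h2 := (aux_slope_rpow (-pb)).neg
  have h3 := h1.div h2 (by simpa using hpb)
  have h4 : pa / - -pb = pa / pb := by ring
  rw [h4] at h3
  refine h3.congr' ?_
  filter_upwards [self_mem_nhdsWithin] with l hl
  have hl1 : (1:ℝ) < l := hl
  have hne : l - 1 ≠ 0 := sub_ne_zero.2 (ne_of_gt hl1)
  show (l ^ pa - 1) / (l - 1) / -((l ^ (-pb) - 1) / (l - 1)) = (l ^ pa - 1) / (1 - l ^ (-pb))
  rw [neg_div', div_div_div_cancel_right₀ hne, neg_sub]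

lemma aux_abel (w : ℝ) (hw : w ≠ 0) (d : ℕ → ℝ) (K : ℕ) :
    ∑ j ∈ Finset.range K, w ^ j * (d (j+1) - d j)
      = (w⁻¹ - 1) * ∑ j ∈ Finset.range K, w ^ j * d j + w⁻¹ * (w ^ K * d K - d 0) := by
  induction K with
  | zero => simp
  | succ K ih =>
    rw [Finset.sum_range_succ, ih, Finset.sum_range_succ]
    field_simp
    ring

lemma aux_pow_rpow {α : ℝ} (x : ℝ) (hx : 0 ≤ x) (K : ℕ) : (x ^ K) ^ α = (x ^ α) ^ K := by
  rw [← Real.rpow_natCast x K, ← Real.rpow_mul hx, mul_comm, Real.rpow_mul hx, Real.rpow_natCast]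

set_option maxHeartbeats 1000000 in
lemma karamata (α θ : ℝ) (hα : 0 < α) (hθ : 0 < θ) (hθα : θ < α)
    (Fb Hf : ℝ → ℝ) (hFbpos : ∀ t, 0 < Fb t) (hFbanti : Antitone Fb)
    (hH0 : ∀ t, 0 < t → 0 ≤ Hf t) (hHle : ∀ t, 0 < t → Hf t ≤ t ^ α)
    (hblockU : ∀ u s : ℝ, 0 < u → u ≤ s → Hf s - Hf u ≤ s ^ α * (Fb u - Fb s))
    (hblockL : ∀ u s : ℝ, 0 < u → u ≤ s → u ^ α * (Fb u - Fb s) ≤ Hf s - Hf u)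
    (hRV : ∀ l : ℝ, 1 < l → Tendsto (fun s => Fb s / Fb (l * s)) atTop (𝓝 (l ^ (α - θ)))) :
    Tendsto (fun t => Hf t / (t ^ α * Fb t)) atTop (𝓝 ((α - θ)/θ)) := by
  set c := (α - θ)/θ with hc
  -- generic facts for a fixed l > 1
  have hdivpow : ∀ l : ℝ, 1 < l → ∀ t : ℝ, 0 < t → ∀ j : ℕ,
      (t / l ^ j) ^ α = t ^ α * (l ^ (-α)) ^ j := by
    intro l hl t ht j
    have hl0 : (0:ℝ) < l := lt_trans one_pos hl
    rw [Real.div_rpow ht.le (pow_pos hl0 _).le, aux_pow_rpow l hl0.le j,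
      Real.rpow_neg hl0.le, inv_pow, div_eq_mul_inv]
  have sum_le : ∀ l : ℝ, 1 < l → ∀ t : ℝ, 0 < t → ∀ K : ℕ,
      Hf t ≤ Hf (t / l ^ K) + t ^ α * ∑ j ∈ Finset.range K,
        (l ^ (-α)) ^ j * (Fb (t / l ^ (j+1)) - Fb (t / l ^ j)) := by
    intro l hl t ht K
    have hl0 : (0:ℝ) < l := lt_trans one_pos hl
    induction K with
    | zero => simp
    | succ K ih =>
      have hu : 0 < t / l ^ (K+1) := div_pos ht (pow_pos hl0 _)
      have hus : t / l ^ (K+1) ≤ t / l ^ K :=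
        div_le_div_of_nonneg_left ht.le (pow_pos hl0 _) (pow_le_pow_right₀ (le_of_lt hl) (Nat.le_succ K)) -- check name
      have hb := hblockU (t / l ^ (K+1)) (t / l ^ K) hu hus
      rw [hdivpow l hl t ht K] at hb
      rw [Finset.sum_range_succ, mul_add, ← add_assoc]
      calc Hf t ≤ Hf (t / l ^ K) + t ^ α * ∑ j ∈ Finset.range K,
            (l ^ (-α)) ^ j * (Fb (t / l ^ (j+1)) - Fb (t / l ^ j)) := ih
        _ ≤ (Hf (t / l ^ (K+1)) + t ^ α * ((l ^ (-α)) ^ K * (Fb (t / l^(K+1)) - Fb (t / l^K))))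
            + t ^ α * ∑ j ∈ Finset.range K,
              (l ^ (-α)) ^ j * (Fb (t / l ^ (j+1)) - Fb (t / l ^ j)) := by
          have : Hf (t / l ^ K) ≤ Hf (t / l ^ (K+1))
              + t ^ α * ((l ^ (-α)) ^ K * (Fb (t / l^(K+1)) - Fb (t / l^K))) := by
            nlinarith [hb]
          linarith
        _ = _ := by ring
  have sum_ge : ∀ l : ℝ, 1 < l → ∀ t : ℝ, 0 < t → ∀ K : ℕ,
      Hf (t / l ^ K) + t ^ α * l ^ (-α) * ∑ j ∈ Finset.range K,
        (l ^ (-α)) ^ j * (Fb (t / l ^ (j+1)) - Fb (t / l ^ j)) ≤ Hf t := by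
    intro l hl t ht K
    have hl0 : (0:ℝ) < l := lt_trans one_pos hl
    induction K with
    | zero => simp
    | succ K ih =>
      have hu : 0 < t / l ^ (K+1) := div_pos ht (pow_pos hl0 _)
      have hus : t / l ^ (K+1) ≤ t / l ^ K :=
        div_le_div_of_nonneg_left ht.le (pow_pos hl0 _) (pow_le_pow_right₀ (le_of_lt hl) (Nat.le_succ K))
      have hb := hblockL (t / l ^ (K+1)) (t / l ^ K) hu hus
      rw [hdivpow l hl t ht (K+1)] at hb
      rw [Finset.sum_range_succ, mul_add]
      have hexp : t ^ α * l ^ (-α) * ((l ^ (-α)) ^ K * (Fb (t / l ^ (K+1)) - Fb (t / l ^ K)))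
          = t ^ α * (l ^ (-α)) ^ (K+1) * (Fb (t / l ^ (K+1)) - Fb (t / l ^ K)) := by ring
      nlinarith [ih, hb]
  -- UPPER eventual bound
  have upper : ∀ ε, 0 < ε → ∀ᶠ t in atTop, Hf t / (t ^ α * Fb t) < c + ε := by
    intro ε hε
    have hcont : Tendsto (fun s : ℝ => (α - s)/s) (𝓝[<] θ) (𝓝 c) := by
      have hca : ContinuousAt (fun s : ℝ => (α - s)/s) θ :=
        (continuousAt_const.sub continuousAt_id).div continuousAt_id hθ.ne'
      exact hca.tendsto.mono_left nhdsWithin_le_nhds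
    obtain ⟨θ', hθ'B, hθ'0, hθ'θ⟩ :=
      (((hcont.eventually_lt_const (by linarith : c < c + ε/4)).and
        (((eventually_gt_nhds hθ).filter_mono nhdsWithin_le_nhds).and
          self_mem_nhdsWithin)).exists)
    have hθ'θ : θ' < θ := hθ'θ
    have hBlim : Tendsto (fun l : ℝ => (l ^ α - 1)/(1 - l ^ (-θ')) - l ^ α)
        (𝓝[>] (1:ℝ)) (𝓝 (α/θ' - 1)) := by
      refine (aux_tendsto_ratio α θ' hθ'0.ne').sub ?_
      have hca : ContinuousAt (fun l : ℝ => l ^ α) 1 :=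
        Real.continuousAt_rpow_const 1 α (Or.inl one_ne_zero)
      have := hca.tendsto.mono_left (nhdsWithin_le_nhds (s := Set.Ioi (1:ℝ)))
      simpa using this
    have hBval : α/θ' - 1 < c + ε/2 := by
      have hh : α/θ' - 1 = (α - θ')/θ' := by field_simp
      rw [hh]; linarith
    obtain ⟨l, hlB, hl1⟩ := ((hBlim.eventually_lt_const hBval).and self_mem_nhdsWithin).exists
    have hl1 : (1:ℝ) < l := hl1
    have hl0 : (0:ℝ) < l := lt_trans one_pos hl1
    set w : ℝ := l ^ (-α) with hwdef
    set q : ℝ := l ^ (-θ') with hqdef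
    set ρ : ℝ := l ^ (α - θ') with hρdef
    have hw0 : 0 < w := Real.rpow_pos_of_pos hl0 _
    have hw1 : w < 1 := Real.rpow_lt_one_of_one_lt_of_neg hl1 (by linarith)
    have hq0 : 0 < q := Real.rpow_pos_of_pos hl0 _
    have hq1 : q < 1 := Real.rpow_lt_one_of_one_lt_of_neg hl1 (by linarith)
    have hρ0 : 0 < ρ := Real.rpow_pos_of_pos hl0 _
    have hwρ : w * ρ = q := by
      rw [hwdef, hρdef, hqdef, ← Real.rpow_add hl0]; ring_nf
    have hwinv : w⁻¹ = l ^ α := by rw [hwdef, ← Real.rpow_neg hl0.le, neg_neg]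
    have hwinv1 : 1 ≤ w⁻¹ := by
      rw [le_inv_comm₀ one_pos hw0]; simpa using hw1.le
    -- threshold
    have hlt : l ^ (α - θ) < ρ := by
      rw [hρdef]; exact Real.rpow_lt_rpow_of_exponent_lt hl1 (by linarith)
    obtain ⟨T₁, hT₁⟩ := eventually_atTop.1 ((hRV l hl1).eventually_lt_const hlt)
    set T := max T₁ 1 with hTdef
    have hT1 : (1:ℝ) ≤ T := le_max_right _ _
    have hTpos : (0:ℝ) < T := lt_of_lt_of_le one_pos hT1
    have hTprop : ∀ s, T ≤ s → Fb s ≤ ρ * Fb (l * s) := by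
      intro s hs
      have h := hT₁ s (le_trans (le_max_left _ _) hs)
      have hpos := hFbpos (l * s)
      rw [div_lt_iff₀ hpos] at h
      nlinarith
    -- chain
    have chain : ∀ (k : ℕ) (s : ℝ), T ≤ s / l ^ k → Fb (s / l ^ k) ≤ ρ ^ k * Fb s := by
      intro k
      induction k with
      | zero => intro s hs; simp
      | succ k ih =>
        intro s hs
        have hq' : 0 < s / l ^ (k+1) := lt_of_lt_of_le hTpos hs
        have hspos : 0 < s := by
          have h := mul_pos hq' (pow_pos hl0 (k+1))
          rwa [div_mul_cancel₀ _ (pow_pos hl0 (k+1)).ne'] at h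
        have hs' : T ≤ s / l ^ k :=
          le_trans hs (div_le_div_of_nonneg_left hspos.le (pow_pos hl0 k)
            (pow_le_pow_right₀ hl1.le (Nat.le_succ k)))
        have heq : l * (s / l ^ (k+1)) = s / l ^ k := by
          rw [pow_succ]
          field_simp
        calc Fb (s / l ^ (k+1)) ≤ ρ * Fb (l * (s / l ^ (k+1))) := hTprop _ hs
          _ = ρ * Fb (s / l ^ k) := by rw [heq]
          _ ≤ ρ * (ρ ^ k * Fb s) := mul_le_mul_of_nonneg_left (ih s hs') hρ0.le
          _ = ρ ^ (k+1) * Fb s := by ring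
    -- K function
    set Kf : ℝ → ℕ := fun t => ⌊Real.log (t / T) / Real.log l⌋₊ with hKfdef
    have hlogl : 0 < Real.log l := Real.log_pos hl1
    have hKtend : Tendsto Kf atTop atTop := by
      apply tendsto_nat_floor_atTop.comp
      apply Tendsto.atTop_div_const hlogl
      exact Real.tendsto_log_atTop.comp (tendsto_id.atTop_div_const hTpos)
    have hK1 : ∀ t, T ≤ t → T * l ^ (Kf t) ≤ t := by
      intro t ht
      have ht0 : 0 < t := lt_of_lt_of_le hTpos ht
      have h1 : (Kf t : ℝ) * Real.log l ≤ Real.log (t / T) :=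
        (le_div_iff₀ hlogl).1 (Nat.floor_le
          (div_nonneg (Real.log_nonneg ((one_le_div hTpos).2 ht)) hlogl.le))
      rw [← Real.log_pow] at h1
      have h2 : (l:ℝ) ^ (Kf t) ≤ t / T :=
        (Real.log_le_log_iff (pow_pos hl0 _) (div_pos ht0 hTpos)).1 h1
      have h3 := (le_div_iff₀ hTpos).1 h2
      linarith
    have hK2 : ∀ t, T ≤ t → t ≤ (l * T) * l ^ (Kf t) := by
      intro t ht
      have ht0 : 0 < t := lt_of_lt_of_le hTpos ht
      have hfl := Nat.lt_floor_add_one (Real.log (t / T) / Real.log l)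
      have h1 : Real.log (t / T) < ((Kf t : ℝ) + 1) * Real.log l := by
        calc Real.log (t/T) = (Real.log (t/T) / Real.log l) * Real.log l := by
              field_simp
          _ < ((Kf t : ℝ) + 1) * Real.log l := by
              apply mul_lt_mul_of_pos_right _ hlogl
              exact_mod_cast hfl
      have h2 : t / T < l ^ (Kf t + 1) := by
        have hlog : Real.log (t/T) < Real.log (l ^ (Kf t + 1)) := by
          rw [Real.log_pow]; push_cast; linarith
        exact (Real.log_lt_log_iff (div_pos ht0 hTpos) (pow_pos hl0 _)).1 hlog
      have h3 := (div_lt_iff₀ hTpos).1 h2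
      calc t ≤ l ^ (Kf t + 1) * T := h3.le
        _ = (l * T) * l ^ (Kf t) := by rw [pow_succ]; ring
    -- vanishing terms
    have hE2 : ∀ᶠ t in atTop, w⁻¹ * q ^ (Kf t) < ε/4 := by
      have h := ((tendsto_pow_atTop_nhds_zero_of_lt_one hq0.le hq1).comp hKtend).const_mul w⁻¹
      rw [mul_zero] at h
      exact h.eventually_lt_const (by linarith)
    have hlθ' : 1 < l ^ θ' := Real.one_lt_rpow_iff_of_pos hl0 |>.2 (Or.inl ⟨hl1, hθ'0⟩)
    have hφ : Tendsto (fun t => t ^ α * Fb t) atTop atTop := by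
      apply tendsto_atTop_mono' atTop
        (f₁ := fun t => (T ^ α * Fb (l*T)) * (l ^ θ') ^ (Kf t)) ?_ ?_
      · filter_upwards [eventually_ge_atTop T] with t ht
        have ht0 : 0 < t := lt_of_lt_of_le hTpos ht
        have hTl : T ≤ t / l ^ (Kf t) :=
          (le_div_iff₀ (pow_pos hl0 _)).2 (by linarith [hK1 t ht])
        have hch := chain (Kf t) t hTl
        have hanti : Fb (l*T) ≤ Fb (t / l ^ (Kf t)) :=
          hFbanti ((div_le_iff₀ (pow_pos hl0 _)).2 (by linarith [hK2 t ht]))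
        have hFbt : Fb (l*T) ≤ ρ ^ (Kf t) * Fb t := le_trans hanti hch
        have htα : (T * l ^ (Kf t)) ^ α ≤ t ^ α :=
          Real.rpow_le_rpow (by positivity) (hK1 t ht) hα.le
        have hmul : (T * l ^ (Kf t)) ^ α = T ^ α * (l ^ α) ^ (Kf t) := by
          rw [Real.mul_rpow hTpos.le (pow_pos hl0 _).le, aux_pow_rpow l hl0.le]
        have h5 : Fb (l*T) / ρ ^ (Kf t) ≤ Fb t :=
          (div_le_iff₀ (pow_pos hρ0 _)).2 (by linarith [hFbt])
        calc T^α * Fb (l*T) * (l^θ')^(Kf t)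
            = (T^α * (l^α)^(Kf t)) * (Fb (l*T) / ρ^(Kf t)) := by
              have hlθeq : l ^ θ' = l ^ α / ρ := by
                rw [hρdef, ← Real.rpow_sub hl0]; ring_nf
              rw [hlθeq, div_pow]
              field_simp
          _ ≤ t^α * Fb t := by
              apply mul_le_mul (hmul ▸ htα) h5
                (div_nonneg (hFbpos _).le (pow_nonneg hρ0.le _)) (Real.rpow_nonneg ht0.le _)
      · apply Tendsto.const_mul_atTop
          (mul_pos (Real.rpow_pos_of_pos hTpos _) (hFbpos _) : (0:ℝ) < T ^ α * Fb (l*T))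
        exact (tendsto_pow_atTop_atTop_of_one_lt hlθ').comp hKtend
    have hE1 : ∀ᶠ t in atTop, (l*T) ^ α / (t ^ α * Fb t) < ε/4 := by
      filter_upwards [hφ.eventually_gt_atTop ((l*T)^α / (ε/4)),
        hφ.eventually_gt_atTop 0] with t h1 h2
      rw [div_lt_iff₀ h2]
      rw [div_lt_iff₀ (by linarith : (0:ℝ) < ε/4)] at h1
      linarith
    -- main
    filter_upwards [hE1, hE2, eventually_ge_atTop T] with t h1 h2 htT
    have ht0 : 0 < t := lt_of_lt_of_le hTpos htT
    have hden : 0 < t ^ α * Fb t := mul_pos (Real.rpow_pos_of_pos ht0 _) (hFbpos t)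
    set K := Kf t with hKdef
    have hTlK : T ≤ t / l ^ K := (le_div_iff₀ (pow_pos hl0 _)).2 (by linarith [hK1 t htT])
    have hdj : ∀ j, j ≤ K → Fb (t / l ^ j) ≤ ρ ^ j * Fb t := by
      intro j hj
      apply chain
      exact le_trans hTlK (div_le_div_of_nonneg_left ht0.le (pow_pos hl0 _)
        (pow_le_pow_right₀ hl1.le hj))
    have habel := aux_abel w hw0.ne' (fun j => Fb (t / l ^ j)) K
    have hsum := sum_le l hl1 t ht0 K
    rw [habel] at hsum
    simp only [pow_zero, div_one] at hsum
    have h1q : (0:ℝ) < 1 - q := by linarith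
    have hS : ∑ j ∈ Finset.range K, w ^ j * Fb (t / l ^ j) ≤ Fb t / (1 - q) := by
      calc ∑ j ∈ Finset.range K, w ^ j * Fb (t / l ^ j)
          ≤ ∑ j ∈ Finset.range K, q ^ j * Fb t := by
            apply Finset.sum_le_sum
            intro j hj
            have hh := hdj j (le_of_lt (Finset.mem_range.1 hj))
            calc w ^ j * Fb (t/l^j) ≤ w^j * (ρ^j * Fb t) :=
                  mul_le_mul_of_nonneg_left hh (pow_nonneg hw0.le _)
              _ = q ^ j * Fb t := by rw [← hwρ, mul_pow]; ring
        _ = (∑ j ∈ Finset.range K, q ^ j) * Fb t := by rw [← Finset.sum_mul]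
        _ ≤ (1/(1-q)) * Fb t := by
            apply mul_le_mul_of_nonneg_right _ (hFbpos t).le
            rw [geom_sum_eq hq1.ne]
            rw [show (q^K - 1)/(q-1) = (1-q^K)/(1-q) by
              rw [← neg_sub (1:ℝ) q, ← neg_sub (1:ℝ) (q^K), neg_div_neg_eq]]
            exact (div_le_div_iff_of_pos_right h1q).2 (by nlinarith [pow_nonneg hq0.le K])
        _ = Fb t / (1-q) := by ring
    have hdK : w ^ K * Fb (t / l ^ K) ≤ q ^ K * Fb t := by
      calc w ^ K * Fb (t/l^K) ≤ w^K * (ρ^K * Fb t) :=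
            mul_le_mul_of_nonneg_left (hdj K le_rfl) (pow_nonneg hw0.le _)
        _ = q ^ K * Fb t := by rw [← hwρ, mul_pow]; ring
    have hHrem : Hf (t / l ^ K) ≤ (l*T) ^ α := by
      refine le_trans (hHle _ (div_pos ht0 (pow_pos hl0 _))) ?_
      apply Real.rpow_le_rpow (le_of_lt (div_pos ht0 (pow_pos hl0 _))) _ hα.le
      exact (div_le_iff₀ (pow_pos hl0 _)).2 (by linarith [hK2 t htT])
    rw [div_lt_iff₀ hden]
    have hB1 : (w⁻¹ - 1) * (∑ j ∈ Finset.range K, w ^ j * Fb (t / l ^ j))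
        ≤ (w⁻¹ - 1) * (Fb t / (1-q)) :=
      mul_le_mul_of_nonneg_left hS (by linarith)
    have hB2 : w⁻¹ * (w ^ K * Fb (t / l ^ K) - Fb t) ≤ w⁻¹ * (q ^ K * Fb t - Fb t) :=
      mul_le_mul_of_nonneg_left (by linarith) (by positivity)
    have hstep : Hf t ≤ (l*T)^α
        + t ^ α * ((w⁻¹ - 1) * (Fb t / (1-q)) + w⁻¹ * (q ^ K * Fb t - Fb t)) := by
      have hmono : (w⁻¹ - 1) * (∑ j ∈ Finset.range K, w ^ j * Fb (t / l ^ j))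
            + w⁻¹ * (w ^ K * Fb (t / l ^ K) - Fb t)
          ≤ (w⁻¹ - 1) * (Fb t / (1-q)) + w⁻¹ * (q ^ K * Fb t - Fb t) := by linarith
      have := mul_le_mul_of_nonneg_left hmono (Real.rpow_nonneg ht0.le α)
      linarith
    have hring : t ^ α * ((w⁻¹ - 1) * (Fb t / (1-q)) + w⁻¹ * (q ^ K * Fb t - Fb t))
        = ((w⁻¹ - 1)/(1-q) - w⁻¹) * (t^α * Fb t) + (w⁻¹ * q^K) * (t^α * Fb t) := by
      field_simp [h1q.ne']
      ring
    rw [hring] at hstep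
    have hA2 : (l*T)^α < (ε/4) * (t^α * Fb t) := by
      rw [div_lt_iff₀ hden] at h1; linarith
    have hA3 : (w⁻¹ * q^K) * (t^α * Fb t) < (ε/4) * (t^α * Fb t) :=
      mul_lt_mul_of_pos_right h2 hden
    have hA4 : ((w⁻¹ - 1)/(1-q) - w⁻¹) * (t^α * Fb t) < (c + ε/2) * (t^α * Fb t) := by
      apply mul_lt_mul_of_pos_right _ hden
      have : (w⁻¹ - 1)/(1-q) - w⁻¹ = (l ^ α - 1)/(1 - l ^ (-θ')) - l ^ α := by
        rw [hwinv, hqdef]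
      rw [this]; linarith [hlB]
    nlinarith
  -- LOWER eventual bound
  have lower : ∀ ε, 0 < ε → ∀ᶠ t in atTop, c - ε < Hf t / (t ^ α * Fb t) := by
    intro ε hε
    have hcont : Tendsto (fun s : ℝ => (α - s)/s) (𝓝[>] θ) (𝓝 c) := by
      have hca : ContinuousAt (fun s : ℝ => (α - s)/s) θ :=
        (continuousAt_const.sub continuousAt_id).div continuousAt_id hθ.ne'
      exact hca.tendsto.mono_left nhdsWithin_le_nhds
    obtain ⟨θ'', hθ''B, hθ''θ⟩ :=
      ((hcont.eventually_const_lt (by linarith : c - ε/4 < c)).and self_mem_nhdsWithin).exists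
    have hθ''θ : θ < θ'' := hθ''θ
    have hθ''0 : 0 < θ'' := lt_trans hθ hθ''θ
    have hBlim : Tendsto (fun l : ℝ => -((l ^ (-α) - 1)/(1 - l ^ (-θ''))) - 1)
        (𝓝[>] (1:ℝ)) (𝓝 (α/θ'' - 1)) := by
      have h := ((aux_tendsto_ratio (-α) θ'' hθ''0.ne').neg).sub_const 1
      have heq : -(-α/θ'') - 1 = α/θ'' - 1 := by ring
      rwa [heq] at h
    have hBval : c - ε/2 < α/θ'' - 1 := by
      have hh : α/θ'' - 1 = (α - θ'')/θ'' := by field_simp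
      rw [hh]; linarith
    obtain ⟨l, hlB, hl1⟩ := ((hBlim.eventually_const_lt hBval).and self_mem_nhdsWithin).exists
    have hl1 : (1:ℝ) < l := hl1
    have hl0 : (0:ℝ) < l := lt_trans one_pos hl1
    set w : ℝ := l ^ (-α) with hwdef
    set q : ℝ := l ^ (-θ'') with hqdef
    set ρ : ℝ := l ^ (α - θ'') with hρdef
    have hw0 : 0 < w := Real.rpow_pos_of_pos hl0 _
    have hw1 : w < 1 := Real.rpow_lt_one_of_one_lt_of_neg hl1 (by linarith)
    have hq0 : 0 < q := Real.rpow_pos_of_pos hl0 _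
    have hq1 : q < 1 := Real.rpow_lt_one_of_one_lt_of_neg hl1 (by linarith)
    have hρ0 : 0 < ρ := Real.rpow_pos_of_pos hl0 _
    have hwρ : w * ρ = q := by
      rw [hwdef, hρdef, hqdef, ← Real.rpow_add hl0]; ring_nf
    have h1q : (0:ℝ) < 1 - q := by linarith
    -- threshold (lower)
    have hlt : ρ < l ^ (α - θ) := by
      rw [hρdef]; exact Real.rpow_lt_rpow_of_exponent_lt hl1 (by linarith)
    obtain ⟨T₁, hT₁⟩ := eventually_atTop.1 ((hRV l hl1).eventually_const_lt hlt)
    set T := max T₁ 1 with hTdef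
    have hT1 : (1:ℝ) ≤ T := le_max_right _ _
    have hTpos : (0:ℝ) < T := lt_of_lt_of_le one_pos hT1
    have hTprop : ∀ s, T ≤ s → ρ * Fb (l * s) ≤ Fb s := by
      intro s hs
      have h := hT₁ s (le_trans (le_max_left _ _) hs)
      have hpos := hFbpos (l * s)
      rw [lt_div_iff₀ hpos] at h
      nlinarith
    -- chain (lower)
    have chain : ∀ (k : ℕ) (s : ℝ), T ≤ s / l ^ k → ρ ^ k * Fb s ≤ Fb (s / l ^ k) := by
      intro k
      induction k with
      | zero => intro s hs; simp
      | succ k ih =>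
        intro s hs
        have hq' : 0 < s / l ^ (k+1) := lt_of_lt_of_le hTpos hs
        have hspos : 0 < s := by
          have h := mul_pos hq' (pow_pos hl0 (k+1))
          rwa [div_mul_cancel₀ _ (pow_pos hl0 (k+1)).ne'] at h
        have hs' : T ≤ s / l ^ k :=
          le_trans hs (div_le_div_of_nonneg_left hspos.le (pow_pos hl0 k)
            (pow_le_pow_right₀ hl1.le (Nat.le_succ k)))
        have heq : l * (s / l ^ (k+1)) = s / l ^ k := by
          rw [pow_succ]
          field_simp
        calc ρ ^ (k+1) * Fb s = ρ * (ρ ^ k * Fb s) := by ring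
          _ ≤ ρ * Fb (s / l ^ k) := mul_le_mul_of_nonneg_left (ih s hs') hρ0.le
          _ = ρ * Fb (l * (s / l ^ (k+1))) := by rw [heq]
          _ ≤ Fb (s / l ^ (k+1)) := hTprop _ hs
    -- K function
    set Kf : ℝ → ℕ := fun t => ⌊Real.log (t / T) / Real.log l⌋₊ with hKfdef
    have hlogl : 0 < Real.log l := Real.log_pos hl1
    have hKtend : Tendsto Kf atTop atTop := by
      apply tendsto_nat_floor_atTop.comp
      apply Tendsto.atTop_div_const hlogl
      exact Real.tendsto_log_atTop.comp (tendsto_id.atTop_div_const hTpos)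
    have hK1 : ∀ t, T ≤ t → T * l ^ (Kf t) ≤ t := by
      intro t ht
      have ht0 : 0 < t := lt_of_lt_of_le hTpos ht
      have h1 : (Kf t : ℝ) * Real.log l ≤ Real.log (t / T) :=
        (le_div_iff₀ hlogl).1 (Nat.floor_le
          (div_nonneg (Real.log_nonneg ((one_le_div hTpos).2 ht)) hlogl.le))
      rw [← Real.log_pow] at h1
      have h2 : (l:ℝ) ^ (Kf t) ≤ t / T :=
        (Real.log_le_log_iff (pow_pos hl0 _) (div_pos ht0 hTpos)).1 h1
      have h3 := (le_div_iff₀ hTpos).1 h2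
      linarith
    -- vanishing term
    have hE2 : ∀ᶠ t in atTop, (1-w) * q ^ (Kf t) / (1-q) < ε/2 := by
      have h := (((tendsto_pow_atTop_nhds_zero_of_lt_one hq0.le hq1).comp
        hKtend).const_mul (1-w)).div_const (1-q)
      rw [mul_zero, zero_div] at h
      exact h.eventually_lt_const (by linarith)
    -- main
    filter_upwards [hE2, eventually_ge_atTop T] with t h2 htT
    have ht0 : 0 < t := lt_of_lt_of_le hTpos htT
    have hden : 0 < t ^ α * Fb t := mul_pos (Real.rpow_pos_of_pos ht0 _) (hFbpos t)
    set K := Kf t with hKdef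
    have hTlK : T ≤ t / l ^ K := (le_div_iff₀ (pow_pos hl0 _)).2 (by linarith [hK1 t htT])
    have hdj : ∀ j, j ≤ K → ρ ^ j * Fb t ≤ Fb (t / l ^ j) := by
      intro j hj
      apply chain
      exact le_trans hTlK (div_le_div_of_nonneg_left ht0.le (pow_pos hl0 _)
        (pow_le_pow_right₀ hl1.le hj))
    have habel := aux_abel w hw0.ne' (fun j => Fb (t / l ^ j)) K
    have hsum := sum_ge l hl1 t ht0 K
    rw [habel] at hsum
    simp only [pow_zero, div_one] at hsum
    have hS : Fb t * ((1 - q^K) / (1-q)) ≤ ∑ j ∈ Finset.range K, w ^ j * Fb (t / l ^ j) := by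
      calc Fb t * ((1 - q^K) / (1-q)) = ∑ j ∈ Finset.range K, q ^ j * Fb t := by
            rw [← Finset.sum_mul, geom_sum_eq hq1.ne,
              show (q^K - 1)/(q-1) = (1-q^K)/(1-q) by
                rw [← neg_sub (1:ℝ) q, ← neg_sub (1:ℝ) (q^K), neg_div_neg_eq]]
            ring
        _ ≤ ∑ j ∈ Finset.range K, w ^ j * Fb (t / l ^ j) := by
            apply Finset.sum_le_sum
            intro j hj
            have hh := hdj j (le_of_lt (Finset.mem_range.1 hj))
            calc q ^ j * Fb t = w^j * (ρ^j * Fb t) := by rw [← hwρ, mul_pow]; ring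
              _ ≤ w ^ j * Fb (t/l^j) :=
                  mul_le_mul_of_nonneg_left hh (pow_nonneg hw0.le _)
    have hrem : 0 ≤ Hf (t / l ^ K) := hH0 _ (div_pos ht0 (pow_pos hl0 _))
    have hdK : 0 ≤ w ^ K * Fb (t / l ^ K) :=
      mul_nonneg (pow_nonneg hw0.le _) (hFbpos _).le
    rw [lt_div_iff₀ hden]
    -- Hf t ≥ t^α * w * [(w⁻¹ -1) S + w⁻¹ (w^K d_K - Fb t)]
    have hstep : t ^ α * w * ((w⁻¹ - 1) * (Fb t * ((1 - q^K) / (1-q)))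
        + w⁻¹ * (0 - Fb t)) ≤ Hf t := by
      have hmono : (w⁻¹ - 1) * (Fb t * ((1 - q^K) / (1-q))) + w⁻¹ * (0 - Fb t)
          ≤ (w⁻¹ - 1) * (∑ j ∈ Finset.range K, w ^ j * Fb (t / l ^ j))
            + w⁻¹ * (w ^ K * Fb (t / l ^ K) - Fb t) := by
        have hw' : 0 ≤ w⁻¹ - 1 := by
          have : 1 ≤ w⁻¹ := by rw [le_inv_comm₀ one_pos hw0]; simpa using hw1.le
          linarith
        have e1 := mul_le_mul_of_nonneg_left hS hw'
        have e2 : w⁻¹ * (0 - Fb t) ≤ w⁻¹ * (w ^ K * Fb (t / l ^ K) - Fb t) :=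
          mul_le_mul_of_nonneg_left (by linarith) (by positivity)
        linarith
      have := mul_le_mul_of_nonneg_left hmono
        (mul_nonneg (Real.rpow_nonneg ht0.le α) hw0.le)
      calc t ^ α * w * ((w⁻¹ - 1) * (Fb t * ((1 - q^K) / (1-q))) + w⁻¹ * (0 - Fb t))
          ≤ t ^ α * w * ((w⁻¹ - 1) * (∑ j ∈ Finset.range K, w ^ j * Fb (t / l ^ j))
            + w⁻¹ * (w ^ K * Fb (t / l ^ K) - Fb t)) := this
        _ = t ^ α * (l ^ (-α)) * ((w⁻¹ - 1) * (∑ j ∈ Finset.range K, w ^ j * Fb (t / l ^ j))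
            + w⁻¹ * (w ^ K * Fb (t / l ^ K) - Fb t)) := by rw [← hwdef]
        _ ≤ Hf t := by linarith [hsum, hrem]
    have hring : t ^ α * w * ((w⁻¹ - 1) * (Fb t * ((1 - q^K) / (1-q))) + w⁻¹ * (0 - Fb t))
        = ((1-w) * ((1 - q^K)/(1-q)) - 1) * (t^α * Fb t) := by
      field_simp [h1q.ne']
      ring
    rw [hring] at hstep
    have hfinal : (c - ε) * (t ^ α * Fb t) < ((1-w) * ((1 - q^K)/(1-q)) - 1) * (t^α * Fb t) := by
      apply mul_lt_mul_of_pos_right _ hden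
      have hBl' : c - ε/2 < -((w - 1)/(1 - q)) - 1 := by
        have : -((w - 1)/(1 - q)) - 1 = -((l^(-α) - 1)/(1 - l^(-θ''))) - 1 := by
          rw [hwdef, hqdef]
        rw [this]; linarith [hlB]
      have hexp : (1-w) * ((1 - q^K)/(1-q)) - 1
          = (-((w - 1)/(1 - q)) - 1) - (1-w) * q^K / (1-q) := by
        field_simp
        ring
      rw [hexp]
      linarith [h2]
    linarith
  -- conclusion
  rw [tendsto_order]
  constructor
  · intro b hb
    filter_upwards [lower (c - b) (by linarith)] with t h
    linarith
  · intro b hb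
    filter_upwards [upper (b - c) (by linarith)] with t h
    linarith

set_option maxHeartbeats 1000000 in
theorem kendall_clt_regvar
    (α θ : ℝ) (hα : 0 < α) (hθ : 0 < θ) (hθα : θ < α)
    (ν : Measure ℝ) [IsProbabilityMeasure ν] (hν : ν (Set.Iio 0) = 0)
    (F G H : ℝ → ℝ)
    (hF : ∀ t, F t = (ν (Set.Iic t)).toReal)
    (hG : ∀ t, 0 < t → G t = ∫ x, max (1 - (x / t) ^ α) 0 ∂ν)
    (hH : ∀ t, 0 < t → H t = ∫ x in Set.Icc 0 t, x ^ α ∂ν)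
    (htail : ∀ x, F x < 1)
    (hRV : ∀ l, 0 < l →
      Tendsto (fun x => (1 - F (l * x)) / (1 - F x)) atTop (𝓝 (l ^ (θ - α))))
    (Fn : ℕ → ℝ → ℝ)
    (hFn : ∀ (n : ℕ) (t : ℝ), 0 < t →
      Fn n t = (G t) ^ (n - 1) * ((n : ℝ) * t ^ (-α) * H t + G t))
    (a : ℕ → ℝ) (ha : Tendsto a atTop atTop)
    (haH : Tendsto (fun n : ℕ => (n : ℝ) * (a n) ^ (-α) * H (a n)) atTop (𝓝 1)) :
    (∃ b : ℕ → ℝ, Tendsto b atTop atTop ∧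
      Tendsto (fun n : ℕ => (n : ℝ) * (b n) ^ (-α) * H (b n)) atTop (𝓝 1)) ∧
    ∀ x, 0 < x →
      Tendsto (fun n : ℕ => Fn n (a n * x)) atTop
        (𝓝 ((1 + x ^ (θ - α)) * Real.exp (-(α / (α - θ)) * x ^ (θ - α)))) := by
  constructor
  · exact ⟨a, ha, haH⟩
  intro x hx
  -- basic facts
  have hFmono : Monotone F := fun s t hst => by
    rw [hF, hF]
    exact ENNReal.toReal_mono (measure_ne_top _ _) (measure_mono (Set.Iic_subset_Iic.2 hst))
  have hFbpos : ∀ t, 0 < 1 - F t := fun t => by linarith [htail t]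
  have hFbanti : Antitone (fun t => 1 - F t) := fun s t hst => sub_le_sub_left (hFmono hst) 1
  have hH0' : ∀ t : ℝ, 0 < t → 0 ≤ H t := fun t ht => by
    rw [hH t ht]; exact aux_H_nonneg ν t
  have hHle' : ∀ t : ℝ, 0 < t → H t ≤ t ^ α := fun t ht => by
    rw [hH t ht]; exact aux_H_le ν hα t ht.le
  have hblockU' : ∀ u s : ℝ, 0 < u → u ≤ s →
      H s - H u ≤ s ^ α * ((1 - F u) - (1 - F s)) := by
    intro u s hu hus
    have hs : 0 < s := lt_of_lt_of_le hu hus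
    rw [hH u hu, hH s hs, aux_int_split ν hα u s hu.le hus]
    have h := aux_int_Ioc_le ν hα u s hu.le hus
    rw [aux_meas_Ioc ν u s hus, ← hF, ← hF] at h
    have h2 : s ^ α * ((1 - F u) - (1 - F s)) = s ^ α * (F s - F u) := by ring
    rw [h2]; linarith
  have hblockL' : ∀ u s : ℝ, 0 < u → u ≤ s →
      u ^ α * ((1 - F u) - (1 - F s)) ≤ H s - H u := by
    intro u s hu hus
    have hs : 0 < s := lt_of_lt_of_le hu hus
    rw [hH u hu, hH s hs, aux_int_split ν hα u s hu.le hus]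
    have h := aux_int_Ioc_ge ν hα u s hu.le hus
    rw [aux_meas_Ioc ν u s hus, ← hF, ← hF] at h
    have h2 : u ^ α * ((1 - F u) - (1 - F s)) = u ^ α * (F s - F u) := by ring
    rw [h2]; linarith
  have hRV' : ∀ l : ℝ, 1 < l →
      Tendsto (fun s => (1 - F s) / (1 - F (l * s))) atTop (𝓝 (l ^ (α - θ))) := by
    intro l hl
    have hl0 : (0:ℝ) < l := lt_trans one_pos hl
    have h := (hRV l hl0).inv₀ (ne_of_gt (Real.rpow_pos_of_pos hl0 _))
    rw [show (l ^ (θ - α))⁻¹ = l ^ (α - θ) by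
      rw [show α - θ = -(θ - α) by ring, Real.rpow_neg hl0.le]] at h
    exact h.congr fun s => inv_div _ _
  have kar := karamata α θ hα hθ hθα (fun t => 1 - F t) H hFbpos hFbanti hH0' hHle'
    hblockU' hblockL' hRV'
  set c' : ℝ := (α - θ)/θ with hc'def
  have hc'pos : 0 < c' := div_pos (by linarith) hθ
  -- sequences
  have hax : Tendsto (fun n => a n * x) atTop atTop := ha.atTop_mul_const hx
  have hapos : ∀ᶠ n in atTop, 0 < a n := ha.eventually_gt_atTop 0
  have haxpos : ∀ᶠ n in atTop, 0 < a n * x := hax.eventually_gt_atTop 0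
  have kar1 : Tendsto (fun n => H (a n) / ((a n) ^ α * (1 - F (a n)))) atTop (𝓝 c') :=
    kar.comp ha
  have kar2 : Tendsto (fun n => H (a n * x) / ((a n * x) ^ α * (1 - F (a n * x))))
      atTop (𝓝 c') := kar.comp hax
  have hHpos : ∀ᶠ n in atTop, 0 < H (a n) := by
    filter_upwards [kar1.eventually_const_lt (half_lt_self hc'pos), hapos] with n h1 h2
    have hden : 0 < (a n) ^ α * (1 - F (a n)) :=
      mul_pos (Real.rpow_pos_of_pos h2 _) (hFbpos _)
    by_contra hcon
    push_neg at hcon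
    have h3 : H (a n) / ((a n) ^ α * (1 - F (a n))) ≤ 0 := div_nonpos_of_nonpos_of_nonneg hcon hden.le
    have h1' : c'/2 < H (a n) / ((a n) ^ α * (1 - F (a n))) := h1
    linarith [half_pos hc'pos]
  -- n (1 - F (a n)) → 1/c'
  have h1 : Tendsto (fun n : ℕ => (n : ℝ) * (1 - F (a n))) atTop (𝓝 (1 / c')) := by
    have h := haH.div kar1 hc'pos.ne'
    apply h.congr'
    filter_upwards [hapos, hHpos] with n hn hHn
    have hane : (a n) ^ α ≠ 0 := (Real.rpow_pos_of_pos hn _).ne'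
    show (↑n * a n ^ (-α) * H (a n)) / (H (a n) / ((a n) ^ α * (1 - F (a n))))
        = ↑n * (1 - F (a n))
    rw [Real.rpow_neg hn.le]
    field_simp
  -- n (1 - F (a n x)) → (1/c') x^(θ-α)
  have h2 : Tendsto (fun n : ℕ => (n : ℝ) * (1 - F (a n * x))) atTop
      (𝓝 ((1 / c') * x ^ (θ - α))) := by
    have hRVx := (hRV x hx).comp ha
    have h := h1.mul hRVx
    apply h.congr
    intro n
    have hne : (1 - F (a n)) ≠ 0 := (hFbpos _).ne'
    show ↑n * (1 - F (a n)) * ((1 - F (x * a n)) / (1 - F (a n))) = ↑n * (1 - F (a n * x))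
    rw [mul_comm x (a n)]
    field_simp
  -- n (a n x)^(-α) H (a n x) → x^(θ-α)
  have h3 : Tendsto (fun n : ℕ => (n : ℝ) * (a n * x) ^ (-α) * H (a n * x)) atTop
      (𝓝 (x ^ (θ - α))) := by
    have h := h2.mul kar2
    have hlim : (1 / c') * x ^ (θ - α) * c' = x ^ (θ - α) := by
      field_simp
    rw [hlim] at h
    apply h.congr'
    filter_upwards [haxpos] with n hn
    have hsne : ((a n * x) ^ α) ≠ 0 := (Real.rpow_pos_of_pos hn _).ne'
    have hFne : (1 - F (a n * x)) ≠ 0 := (hFbpos _).ne'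
    show (↑n * (1 - F (a n * x))) * (H (a n * x) / ((a n * x) ^ α * (1 - F (a n * x))))
        = ↑n * (a n * x) ^ (-α) * H (a n * x)
    rw [Real.rpow_neg hn.le]
    field_simp
  -- G identity
  have hGid : ∀ᶠ n in atTop, G (a n * x)
      = F (a n * x) - (a n * x) ^ (-α) * H (a n * x) := by
    filter_upwards [haxpos] with n hn
    rw [hG _ hn, hH _ hn, hF]
    exact aux_G_eq ν hα hν _ hn
  -- c_n := n (1 - G (a n x)) → L
  set L : ℝ := (α / (α - θ)) * x ^ (θ - α) with hLdef
  have hLpos : 0 < L :=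
    mul_pos (div_pos hα (by linarith)) (Real.rpow_pos_of_pos hx _)
  have hcn : Tendsto (fun n : ℕ => (n : ℝ) * (1 - G (a n * x))) atTop (𝓝 L) := by
    have h := h2.add h3
    have hLeq : (1 / c') * x ^ (θ - α) + x ^ (θ - α) = L := by
      rw [hLdef, hc'def]
      have hαθ : α - θ ≠ 0 := ne_of_gt (by linarith)
      field_simp
      ring
    rw [hLeq] at h
    apply h.congr'
    filter_upwards [hGid] with n hn
    rw [hn]; ring
  -- G → 1
  have hninv : Tendsto (fun n : ℕ => ((n : ℝ))⁻¹) atTop (𝓝 0) :=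
    tendsto_inv_atTop_zero.comp tendsto_natCast_atTop_atTop
  have h4 : Tendsto (fun n : ℕ => 1 - G (a n * x)) atTop (𝓝 0) := by
    have h := hcn.mul hninv
    rw [mul_zero] at h
    apply h.congr'
    filter_upwards [eventually_ge_atTop 1] with n hn
    have hne : (n : ℝ) ≠ 0 := Nat.cast_ne_zero.2 (by omega)
    field_simp
  have hGlim : Tendsto (fun n : ℕ => G (a n * x)) atTop (𝓝 1) := by
    have h := (tendsto_const_nhds (x := (1:ℝ)) (f := atTop)).sub h4
    rw [sub_zero] at h
    exact h.congr fun n => by ring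
  have hGlt1 : ∀ᶠ n in atTop, G (a n * x) < 1 := by
    filter_upwards [hGid, haxpos] with n hn hpos
    have hHn : 0 ≤ H (a n * x) := hH0' _ hpos
    have : 0 ≤ (a n * x) ^ (-α) * H (a n * x) :=
      mul_nonneg (Real.rpow_nonneg hpos.le _) hHn
    have := htail (a n * x)
    rw [hn]; linarith
  have hGpos : ∀ᶠ n in atTop, 0 < G (a n * x) := hGlim.eventually_const_lt one_pos
  -- (n-1) log G → -L
  have hslope : Tendsto (fun y : ℝ => Real.log y / (y - 1)) (𝓝[≠] (1:ℝ)) (𝓝 1) := by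
    have h := Real.hasDerivAt_log one_ne_zero
    rw [hasDerivAt_iff_tendsto_slope] at h
    have h2 := h.congr fun y => by rw [slope_def_field, Real.log_one, sub_zero]
    simpa using h2
  have hGne : ∀ᶠ n in atTop, G (a n * x) ≠ 1 := hGlt1.mono fun n h => ne_of_lt h
  have hcomp : Tendsto (fun n : ℕ => Real.log (G (a n * x)) / (G (a n * x) - 1))
      atTop (𝓝 1) := by
    apply hslope.comp
    rw [tendsto_nhdsWithin_iff]
    exact ⟨hGlim, hGne.mono fun n h => h⟩
  have hfrac : Tendsto (fun n : ℕ => ((n : ℝ) - 1) / (n : ℝ)) atTop (𝓝 1) := by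
    have h := (tendsto_const_nhds (x := (1:ℝ)) (f := atTop (α := ℕ))).sub hninv
    rw [sub_zero] at h
    apply h.congr'
    filter_upwards [eventually_ge_atTop 1] with n hn
    have hne : (n : ℝ) ≠ 0 := Nat.cast_ne_zero.2 (by omega)
    field_simp
  have hprod : Tendsto (fun n : ℕ => ((n : ℝ) - 1) * (G (a n * x) - 1)) atTop (𝓝 (-L)) := by
    have h := (hfrac.mul hcn).neg
    rw [one_mul] at h
    apply h.congr'
    filter_upwards [eventually_ge_atTop 1] with n hn
    have hne : (n : ℝ) ≠ 0 := Nat.cast_ne_zero.2 (by omega)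
    field_simp
    ring
  have hlog : Tendsto (fun n : ℕ => ((n : ℝ) - 1) * Real.log (G (a n * x))) atTop
      (𝓝 (-L)) := by
    have h := hprod.mul hcomp
    rw [mul_one] at h
    apply h.congr'
    filter_upwards [hGne] with n hn
    have hne : G (a n * x) - 1 ≠ 0 := sub_ne_zero.2 hn
    field_simp
  have hpow : Tendsto (fun n : ℕ => (G (a n * x)) ^ (n - 1)) atTop
      (𝓝 (Real.exp (-L))) := by
    have h := (Real.continuous_exp.tendsto _).comp hlog
    apply h.congr'
    filter_upwards [hGpos, eventually_ge_atTop 1] with n hGp hn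
    show Real.exp (((n : ℝ) - 1) * Real.log (G (a n * x))) = _
    rw [show ((n : ℝ) - 1) = ((n - 1 : ℕ) : ℝ) by
      rw [Nat.cast_sub hn]; norm_num]
    rw [Real.exp_nat_mul, Real.exp_log hGp]
  -- final assembly
  have hfac : Tendsto (fun n : ℕ => (n : ℝ) * (a n * x) ^ (-α) * H (a n * x) + G (a n * x))
      atTop (𝓝 (x ^ (θ - α) + 1)) := h3.add hGlim
  have hfin := hpow.mul hfac
  have hLL : Real.exp (-L) * (x ^ (θ - α) + 1)
      = (1 + x ^ (θ - α)) * Real.exp (-(α / (α - θ)) * x ^ (θ - α)) := by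
    rw [show -L = -(α / (α - θ)) * x ^ (θ - α) by rw [hLdef]; ring]
    ring
  rw [hLL] at hfin
  apply hfin.congr'
  filter_upwards [haxpos] with n hn
  rw [hFn n _ hn]
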